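/- A subspace S of a Kreĭn space H is quasi-pseudo-regular (S is an operator range and S = R ⊕ S⁰ with R regular and S⁰ = S∩S^⊥ neutral) if and only if S is an operator range and S + S^⊥ is closed. -/

import Mathlib

open ContinuousLinearMap

noncomputable section

namespace KreinPaper

variable {H : Type*} [NormedAddCommGroup H] [InnerProductSpace ℂ H] [CompleteSpace H]

/-- The indefinite orthogonal companion of a subspace, with respect to the
indefinite inner product `[x, y] = ⟪J x, y⟫`. -/
def kOrth (J : H →L[ℂ] H) (S : Submodule ℂ H) : Submodule ℂ H where
  carrier := {y | ∀ x ∈ S, (inner ℂ (J x) y : ℂ) = 0}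
  add_mem' := by
    intro a b ha hb x hx
    simp only [Set.mem_setOf_eq] at ha hb ⊢
    rw [inner_add_right, ha x hx, hb x hx, add_zero]
  zero_mem' := by
    intro x _
    exact inner_zero_right _
  smul_mem' := by
    intro c a ha x hx
    simp only [Set.mem_setOf_eq] at ha ⊢
    rw [inner_smul_right, ha x hx, mul_zero]

/-- A regular subspace: closed, with `R ∩ R^⊥ = 0` and `R + R^⊥ = H`. -/
def IsRegular (J : H →L[ℂ] H) (R : Submodule ℂ H) : Prop :=
  IsClosed (R : Set H) ∧ R ⊓ kOrth J R = ⊥ ∧ R ⊔ kOrth J R = ⊤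

/-- A neutral subspace: the indefinite inner product vanishes on it. -/
def IsNeutral (J : H →L[ℂ] H) (N : Submodule ℂ H) : Prop :=
  ∀ n ∈ N, (inner ℂ (J n) n : ℂ) = 0

/-- Two subspaces are orthogonal in the indefinite inner product. -/
def AreKOrth (J : H →L[ℂ] H) (A B : Submodule ℂ H) : Prop :=
  ∀ a ∈ A, ∀ b ∈ B, (inner ℂ (J a) b : ℂ) = 0

/-- An operator range: the range of a bounded operator (equivalently, of a
bounded operator on `H` itself). -/
def IsOpRange (S : Submodule ℂ H) : Prop :=
  ∃ T : H →L[ℂ] H, LinearMap.range (T : H →ₗ[ℂ] H) = S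

/-- Quasi-pseudo-regular subspace: an operator range which is the orthogonal
sum of a regular subspace and a neutral subspace. -/
def IsQpr (J : H →L[ℂ] H) (S : Submodule ℂ H) : Prop :=
  IsOpRange S ∧ ∃ R N : Submodule ℂ H,
    IsRegular J R ∧ IsNeutral J N ∧ AreKOrth J R N ∧ S = R ⊔ N

/-- Pseudo-regular subspace: a closed subspace which is the orthogonal
sum of a regular subspace and a neutral subspace. -/
def IsPseudoRegular (J : H →L[ℂ] H) (S : Submodule ℂ H) : Prop :=
  IsClosed (S : Set H) ∧ ∃ R N : Submodule ℂ H,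
    IsRegular J R ∧ IsNeutral J N ∧ AreKOrth J R N ∧ S = R ⊔ N

/-- A fundamental symmetry: a selfadjoint involution. -/
def IsFundSym (J : H →L[ℂ] H) : Prop :=
  IsSelfAdjoint J ∧ J ∘L J = ContinuousLinearMap.id ℂ H

/-- The indefinite (Kreĭn space) adjoint `A* = J A† J`. -/
def kAdj (J : H →L[ℂ] H) (A : H →L[ℂ] H) : H →L[ℂ] H :=
  J ∘L (ContinuousLinearMap.adjoint A) ∘L J

/-! ### Auxiliary lemmas -/

set_option linter.unusedSectionVars false
set_option maxHeartbeats 1000000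

variable {J : H →L[ℂ] H}

lemma mem_kOrth {S : Submodule ℂ H} {y : H} :
    y ∈ kOrth J S ↔ ∀ x ∈ S, (inner ℂ (J x) y : ℂ) = 0 := Iff.rfl

lemma J_apply_apply (hJ : IsFundSym J) (x : H) : J (J x) = x := by
  have := congrArg (fun f : H →L[ℂ] H => f x) hJ.2
  simpa using this

lemma J_inner_left (hJ : IsFundSym J) (x y : H) :
    (inner ℂ (J x) y : ℂ) = inner ℂ x (J y) := by
  have h : ContinuousLinearMap.adjoint J = J := by
    rw [← ContinuousLinearMap.star_eq_adjoint]; exact hJ.1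
  conv_lhs => rw [← h]
  exact ContinuousLinearMap.adjoint_inner_left J y x

lemma J_inner_inner (hJ : IsFundSym J) (x y : H) :
    (inner ℂ (J x) (J y) : ℂ) = inner ℂ x y := by
  rw [J_inner_left hJ, J_apply_apply hJ]

lemma mem_kOrth' (hJ : IsFundSym J) {S : Submodule ℂ H} {y : H} :
    y ∈ kOrth J S ↔ ∀ x ∈ S, (inner ℂ (J y) x : ℂ) = 0 := by
  constructor
  · intro h x hx
    have h1 := h x hx
    rw [← inner_conj_symm, ← J_inner_left hJ, h1, map_zero]
  · intro h x hx
    have h1 := h x hx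
    rw [← inner_conj_symm, ← J_inner_left hJ, h1, map_zero]

lemma kOrth_eq_orthogonal_map (J : H →L[ℂ] H) (S : Submodule ℂ H) :
    kOrth J S = (S.map (J : H →ₗ[ℂ] H))ᗮ := by
  ext y
  simp only [mem_kOrth, Submodule.mem_orthogonal, Submodule.mem_map]
  constructor
  · rintro h u ⟨x, hx, rfl⟩; exact h x hx
  · intro h x hx; exact h (J x) ⟨x, hx, rfl⟩

lemma isClosed_kOrth (J : H →L[ℂ] H) (S : Submodule ℂ H) :
    IsClosed ((kOrth J S : Submodule ℂ H) : Set H) := by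
  rw [kOrth_eq_orthogonal_map]; exact Submodule.isClosed_orthogonal _

lemma kOrth_anti {S T : Submodule ℂ H} (h : S ≤ T) : kOrth J T ≤ kOrth J S := by
  intro y hy x hx; exact hy x (h hx)

lemma kOrth_topologicalClosure (J : H →L[ℂ] H) (S : Submodule ℂ H) :
    kOrth J S.topologicalClosure = kOrth J S := by
  refine le_antisymm (kOrth_anti (Submodule.le_topologicalClosure S)) ?_
  intro y hy x hx
  have hsub : (S : Set H) ⊆ {z | (inner ℂ (J z) y : ℂ) = 0} := fun z hz => hy z hz
  have hcl : IsClosed {z : H | (inner ℂ (J z) y : ℂ) = 0} := by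
    have : Continuous fun z : H => (inner ℂ (J z) y : ℂ) :=
      Continuous.inner (J.continuous) continuous_const
    exact isClosed_eq this continuous_const
  have : (S.topologicalClosure : Set H) ⊆ {z | (inner ℂ (J z) y : ℂ) = 0} := by
    have := closure_minimal hsub hcl
    simpa [Submodule.topologicalClosure_coe] using this
  exact this hx

/-- Bounded right inverse of a surjective CLM from a Hilbert space. -/
lemma exists_right_inverse {E F : Type*} [NormedAddCommGroup E] [InnerProductSpace ℂ E]
    [CompleteSpace E] [NormedAddCommGroup F] [NormedSpace ℂ F] [CompleteSpace F]
    (f : E →L[ℂ] F) (hf : LinearMap.range (f : E →ₗ[ℂ] F) = ⊤) :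
    ∃ g : F →L[ℂ] E, ∀ v, f (g v) = v := by
  set K := (LinearMap.ker (f : E →ₗ[ℂ] F))ᗮ with hK
  haveI : CompleteSpace K := Submodule.instOrthogonalCompleteSpace _
  set f₀ : K →L[ℂ] F := f ∘L K.subtypeL with hf₀
  have hker : LinearMap.ker (f₀ : K →ₗ[ℂ] F) = ⊥ := by
    rw [Submodule.eq_bot_iff]
    rintro ⟨x, hxK⟩ hx
    have hxker : x ∈ LinearMap.ker (f : E →ₗ[ℂ] F) := by
      simpa [f₀] using hx
    have : x = 0 := by
      have := (Submodule.orthogonal_disjoint (LinearMap.ker (f : E →ₗ[ℂ] F))).symm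
      exact (Submodule.mem_inf.2 ⟨hxK, hxker⟩ :
          x ∈ (LinearMap.ker (f : E →ₗ[ℂ] F))ᗮ ⊓ LinearMap.ker (f : E →ₗ[ℂ] F)) |> fun h => by
        have := this.le_bot h; simpa using this
    simpa [Submodule.mk_eq_zero] using this
  have hrange : LinearMap.range (f₀ : K →ₗ[ℂ] F) = ⊤ := by
    rw [Submodule.eq_top_iff']
    intro v
    obtain ⟨x, hx⟩ : ∃ x, f x = v := (LinearMap.range_eq_top.1 hf v)
    obtain ⟨k, hk, p, hp, hkp⟩ := Submodule.mem_sup.1 <|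
      (Submodule.sup_orthogonal_of_hasOrthogonalProjection (K := LinearMap.ker (f : E →ₗ[ℂ] F))).symm ▸
        Submodule.mem_top (x := x)
    refine ⟨⟨p, hp⟩, ?_⟩
    have : f p = v := by
      have h4 : f x = f k + f p := by rw [← hkp]; simp [map_add]
      rw [hx] at h4
      have hk0 : f k = 0 := hk
      rw [hk0, zero_add] at h4
      exact h4.symm
    simpa [f₀] using this
  let e := ContinuousLinearEquiv.ofBijective f₀ hker hrange
  refine ⟨K.subtypeL ∘L (e.symm : F →L[ℂ] K), fun v => ?_⟩
  have : f₀ (e.symm v) = v := e.apply_symm_apply v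
  simpa [f₀] using this

/-- polarization: a neutral subspace is pairwise k-orthogonal to itself -/
lemma IsNeutral.pair {N : Submodule ℂ H} (hN : IsNeutral J N)
    {n n' : H} (hn : n ∈ N) (hn' : n' ∈ N) : (inner ℂ (J n) n' : ℂ) = 0 := by
  have h1 := hN (n + n') (N.add_mem hn hn')
  have h2 := hN (n + Complex.I • n') (N.add_mem hn (N.smul_mem _ hn'))
  have hnn := hN n hn
  have hnn' := hN n' hn'
  simp only [map_add, map_smul, inner_add_left, inner_add_right, inner_smul_left,
    inner_smul_right, hnn, hnn'] at h1 h2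
  have hI : (starRingEnd ℂ) Complex.I = -Complex.I := by simp [Complex.conj_I]
  rw [hI] at h2
  set a := (inner ℂ (J n) n' : ℂ)
  set b := (inner ℂ (J n') n : ℂ)
  have e1 : a + b = 0 := by linear_combination h1
  have e2 : Complex.I * a - Complex.I * b = 0 := by linear_combination h2
  have h3 : (2 : ℂ) * Complex.I * a = 0 := by linear_combination Complex.I * e1 + e2
  have h2I : (2 : ℂ) * Complex.I ≠ 0 := by simp [Complex.I_ne_zero]
  exact (mul_eq_zero.mp h3).resolve_left h2I

/-- Forward direction: the sum of a regular subspace, a neutral subspace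
k-orthogonal to it, and the companion of their sum, is closed. -/
lemma forward_closed {R N : Submodule ℂ H} (hReg : IsRegular J R) (hNeu : IsNeutral J N)
    (hKO : AreKOrth J R N) :
    IsClosed ((R ⊔ N ⊔ kOrth J (R ⊔ N) : Submodule ℂ H) : Set H) := by
  set W := kOrth J (R ⊔ N) with hW
  have hNW : N ≤ W := by
    intro n hn
    rw [mem_kOrth]
    intro x hx
    obtain ⟨r, hr, n', hn', rfl⟩ := Submodule.mem_sup.1 hx
    rw [map_add, inner_add_left, hKO r hr n hn, hNeu.pair hn' hn, add_zero]
  have hsup : R ⊔ N ⊔ W = R ⊔ W := by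
    refine le_antisymm ?_ (sup_le (le_trans le_sup_left le_sup_left) le_sup_right)
    exact sup_le (sup_le le_sup_left (le_trans hNW le_sup_right)) le_sup_right
  rw [hsup]
  have hWR : W ≤ kOrth J R := kOrth_anti le_sup_left
  have hcompl : IsCompl R (kOrth J R) := by
    constructor
    · rw [disjoint_iff]; exact hReg.2.1
    · rw [codisjoint_iff]; exact hReg.2.2
  set P := R.linearProjOfClosedCompl (kOrth J R) hcompl hReg.1 (isClosed_kOrth J R) with hP
  have hset : ((R ⊔ W : Submodule ℂ H) : Set H) = (fun x => x - (P x : H)) ⁻¹' (W : Set H) := by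
    ext x
    simp only [Set.mem_preimage, SetLike.mem_coe]
    constructor
    · intro hx
      obtain ⟨r, hr, w, hw, rfl⟩ := Submodule.mem_sup.1 hx
      have h1 : P (r + w) = ⟨r, hr⟩ := by
        rw [map_add]
        have h2 : P r = ⟨r, hr⟩ := by
          have := Submodule.linearProjOfIsCompl_apply_left hcompl ⟨r, hr⟩
          simpa [hP, Submodule.coe_continuous_linearProjOfClosedCompl'] using this
        have h3 : P w = 0 := by
          have := Submodule.linearProjOfIsCompl_apply_right hcompl ⟨w, hWR hw⟩
          simpa [hP, Submodule.coe_continuous_linearProjOfClosedCompl'] using this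
        rw [h2, h3, add_zero]
      rw [h1]
      simpa using hw
    · intro hx
      have : x = (P x : H) + (x - (P x : H)) := by abel
      rw [this]
      exact Submodule.mem_sup.2 ⟨_, (P x).2, _, hx, rfl⟩
  rw [hset]
  exact (isClosed_kOrth J (R ⊔ N)).preimage
    (continuous_id.sub (continuous_subtype_val.comp P.continuous))

/-- Backward direction. -/
lemma backward (hJ : IsFundSym J) {S : Submodule ℂ H} (hOp : IsOpRange S)
    (hcl : IsClosed ((S ⊔ kOrth J S : Submodule ℂ H) : Set H)) : IsQpr J S := by
  obtain ⟨T, hT⟩ := hOp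
  set W := kOrth J S with hWdef
  have hWcl : IsClosed (W : Set H) := isClosed_kOrth J S
  set M := S.topologicalClosure with hMdef
  have hWM : kOrth J M = W := kOrth_topologicalClosure J S
  have hSM : S ≤ M := Submodule.le_topologicalClosure S
  have hMcl : IsClosed (M : Set H) := Submodule.isClosed_topologicalClosure S
  have hMV : M ≤ S ⊔ W := Submodule.topologicalClosure_minimal S le_sup_left hcl
  set M0 := M ⊓ W with hM0def
  have hM0cl : IsClosed (M0 : Set H) := by
    have : (M0 : Set H) = (M : Set H) ∩ (W : Set H) := rfl
    rw [this]; exact hMcl.inter hWcl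
  haveI : CompleteSpace M0 := hM0cl.completeSpace_coe
  set P0 : H →L[ℂ] M0 := Submodule.orthogonalProjectionOnto M0 with hP0def
  set E : H →L[ℂ] H := ContinuousLinearMap.id ℂ H - M0.subtypeL ∘L P0 with hEdef
  have hEapply : ∀ x : H, E x = x - (P0 x : H) := fun x => rfl
  set R0 := M ⊓ M0ᗮ with hR0def
  have hM0M : M0 ≤ M := inf_le_left
  have hM0W : M0 ≤ W := inf_le_right
  have hR0M : R0 ≤ M := inf_le_left
  have hEM : ∀ m ∈ M, E m ∈ R0 := by
    intro m hm
    refine ⟨?_, ?_⟩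
    · rw [hEapply]; exact M.sub_mem hm (hM0M (P0 m).2)
    · rw [hEapply]; exact Submodule.sub_starProjection_mem_orthogonal m
  have hEr : ∀ x ∈ M0ᗮ, E x = x := by
    intro x hx
    rw [hEapply, Submodule.orthogonalProjectionOnto_apply_of_mem_orthogonal hx]
    simp
  have hsubE : ∀ x : H, x - E x ∈ M0 := by
    intro x
    rw [hEapply]
    have : x - (x - (P0 x : H)) = (P0 x : H) := by abel
    rw [this]; exact (P0 x).2
  have hETS : ∀ x : H, (E ∘L T) x ∈ R0 := by
    intro x
    exact hEM _ (hSM (hT ▸ LinearMap.mem_range_self _ x))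
  set R1 := LinearMap.range ((E ∘L T : H →L[ℂ] H) : H →ₗ[ℂ] H) with hR1def
  have hR1R0 : R1 ≤ R0 := by rintro _ ⟨x, rfl⟩; exact hETS x
  have hTx : ∀ x : H, T x ∈ S := fun x => hT ▸ LinearMap.mem_range_self _ x
  have hR1V : R1 ≤ S ⊔ W := by
    rintro _ ⟨x, rfl⟩
    have : (E ∘L T) x = T x - ((T x) - E (T x)) := by simp
    rw [ContinuousLinearMap.comp_apply] at this; rw [ContinuousLinearMap.coe_coe, ContinuousLinearMap.comp_apply]
    rw [this]
    exact Submodule.mem_sup.2 ⟨T x, hTx x, -((T x) - E (T x)),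
      W.neg_mem (hM0W (hsubE (T x))), by abel⟩
  have hR1W0 : ∀ x ∈ R1, x ∈ W → x = 0 := by
    intro x hx hxW
    have hx0 : x ∈ M0 := ⟨hR0M (hR1R0 hx), hxW⟩
    have := (hR1R0 hx).2
    have h0 : (inner ℂ x x : ℂ) = 0 := this x hx0
    exact inner_self_eq_zero.1 h0
  -- Step A: R1 is closed
  haveI : CompleteSpace W := hWcl.completeSpace_coe
  set Pw : H →L[ℂ] H := W.subtypeL ∘L Submodule.orthogonalProjectionOnto W with hPwdef
  have hPwW : ∀ x : H, Pw x ∈ W := fun x => (Submodule.orthogonalProjectionOnto W x).2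
  have hPwfix : ∀ w ∈ W, Pw w = w := by
    intro w hw
    have : Submodule.orthogonalProjectionOnto W w = ⟨w, hw⟩ :=
      Submodule.orthogonalProjectionOnto_mem_subspace_eq_self (⟨w, hw⟩ : W)
    simp [hPwdef, this]
  set eqv := WithLp.prodContinuousLinearEquiv 2 ℂ H H with heqvdef
  set C : WithLp 2 (H × H) →L[ℂ] H :=
    ((E ∘L T) ∘L ContinuousLinearMap.fst ℂ H H + Pw ∘L ContinuousLinearMap.snd ℂ H H) ∘L
      (eqv : WithLp 2 (H × H) →L[ℂ] H × H) with hCdef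
  have hCapply : ∀ z, C z = (E ∘L T) (eqv z).1 + Pw (eqv z).2 := fun z => rfl
  set V' := S ⊔ W with hV'def
  haveI : CompleteSpace V' := hcl.completeSpace_coe
  have hCV : ∀ z, C z ∈ V' := by
    intro z
    rw [hCapply]
    exact V'.add_mem (hR1V (LinearMap.mem_range_self _ _)) (le_sup_right (α := Submodule ℂ H) (hPwW _))
  set C' := C.codRestrict V' hCV with hC'def
  have hC'surj : LinearMap.range (C' : WithLp 2 (H × H) →ₗ[ℂ] V') = ⊤ := by
    rw [Submodule.eq_top_iff']
    rintro ⟨v, hv⟩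
    obtain ⟨s, hs, w, hw, rfl⟩ := Submodule.mem_sup.1 hv
    obtain ⟨x, rfl⟩ : ∃ x, T x = s := by
      rw [← hT] at hs; exact hs
    refine ⟨eqv.symm (x, w + (T x - E (T x))), ?_⟩
    apply Subtype.ext
    have hmem : w + (T x - E (T x)) ∈ W := W.add_mem hw (hM0W (hsubE (T x)))
    have : C (eqv.symm (x, w + (T x - E (T x)))) =
        (E ∘L T) x + Pw (w + (T x - E (T x))) := by
      rw [hCapply]; simp
    rw [ContinuousLinearMap.coe_coe, ContinuousLinearMap.coe_codRestrict_apply, this, hPwfix _ hmem]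
    rw [ContinuousLinearMap.comp_apply]
    abel
  obtain ⟨g, hg⟩ := exists_right_inverse C' hC'surj
  have hgC : ∀ v : V', C (g v) = (v : H) := by
    intro v
    have := hg v
    exact congrArg Subtype.val this
  set PV : H →L[ℂ] V' := Submodule.orthogonalProjectionOnto V' with hPVdef
  set Dfull : H →L[ℂ] H :=
    (Pw ∘L ContinuousLinearMap.snd ℂ H H ∘L (eqv : WithLp 2 (H × H) →L[ℂ] H × H)) ∘L g ∘L PV
    with hDdef
  have hDapply : ∀ x : H, Dfull x = Pw ((eqv (g (PV x))).2) := fun x => rfl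
  have hR1set : (R1 : Set H) = (V' : Set H) ∩ (Dfull ⁻¹' {0}) := by
    ext x
    simp only [Set.mem_inter_iff, Set.mem_preimage, Set.mem_singleton_iff, SetLike.mem_coe]
    constructor
    · intro hx
      have hxV : x ∈ V' := hR1V hx
      have hPVx : PV x = ⟨x, hxV⟩ :=
        Submodule.orthogonalProjectionOnto_mem_subspace_eq_self (⟨x, hxV⟩ : V')
      have hdec : (E ∘L T) ((eqv (g ⟨x, hxV⟩)).1) + Pw ((eqv (g ⟨x, hxV⟩)).2) = x := by
        rw [← hCapply]; exact hgC ⟨x, hxV⟩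
      have hmem1 : Pw ((eqv (g ⟨x, hxV⟩)).2) ∈ R1 := by
        rw [eq_sub_of_add_eq' hdec]
        exact R1.sub_mem hx (LinearMap.mem_range_self _ _)
      have h0 : Pw ((eqv (g ⟨x, hxV⟩)).2) = 0 :=
        hR1W0 _ hmem1 (hPwW _)
      exact ⟨hxV, by rw [hDapply, hPVx, h0]⟩
    · rintro ⟨hxV, hD⟩
      have hPVx : PV x = ⟨x, hxV⟩ :=
        Submodule.orthogonalProjectionOnto_mem_subspace_eq_self (⟨x, hxV⟩ : V')
      rw [hDapply, hPVx] at hD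
      have hdec : (E ∘L T) ((eqv (g ⟨x, hxV⟩)).1) + Pw ((eqv (g ⟨x, hxV⟩)).2) = x := by
        rw [← hCapply]; exact hgC ⟨x, hxV⟩
      rw [hD, add_zero] at hdec
      exact hdec ▸ LinearMap.mem_range_self _ _
  have hR1cl : IsClosed (R1 : Set H) := by
    rw [hR1set]
    exact hcl.inter (isClosed_singleton.preimage Dfull.continuous)
  have hR0R1 : R0 ≤ R1 := by
    intro r hr
    have hrM : r ∈ M := hr.1
    have hrE : E r = r := hEr r hr.2
    have h1 : r ∈ closure (E '' (S : Set H)) := by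
      have h2 : r ∈ closure (S : Set H) := by
        rwa [← Submodule.topologicalClosure_coe]
      have h3 : E r ∈ E '' closure (S : Set H) := ⟨r, h2, rfl⟩
      have h4 := image_closure_subset_closure_image (s := (S : Set H)) (f := ⇑E) E.continuous
      rw [hrE] at h3
      exact h4 h3
    have h5 : E '' (S : Set H) ⊆ (R1 : Set H) := by
      rintro _ ⟨s, hs, rfl⟩
      obtain ⟨x, rfl⟩ : ∃ x, T x = s := by rw [← hT] at hs; exact hs
      exact LinearMap.mem_range_self _ x
    have := closure_mono h5 h1
    rwa [hR1cl.closure_eq] at this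
  -- Step B: bounded selection
  have hR0cl : IsClosed (R0 : Set H) := by
    have : (R0 : Set H) = (M : Set H) ∩ (M0ᗮ : Set H) := rfl
    rw [this]; exact hMcl.inter M0.isClosed_orthogonal
  haveI : CompleteSpace R0 := hR0cl.completeSpace_coe
  set f : H →L[ℂ] R0 := (E ∘L T).codRestrict R0 hETS with hfdef
  have hfsurj : LinearMap.range (f : H →ₗ[ℂ] R0) = ⊤ := by
    rw [Submodule.eq_top_iff']
    rintro ⟨r, hr⟩
    obtain ⟨x, hx⟩ := hR0R1 hr
    exact ⟨x, Subtype.ext (by simpa [hfdef] using hx)⟩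
  obtain ⟨g0, hg0⟩ := exists_right_inverse f hfsurj
  set Φ : R0 →L[ℂ] H := T ∘L g0 with hΦdef
  have hΦS : ∀ r : R0, Φ r ∈ S := fun r => hTx _
  have hEΦ : ∀ r : R0, E (Φ r) = (r : H) := by
    intro r
    have := hg0 r
    have := congrArg Subtype.val this
    simpa [hfdef, hΦdef] using this
  have hΦdec : ∀ r : R0, Φ r - (r : H) ∈ M0 := by
    intro r
    have := hsubE (Φ r)
    rwa [hEΦ r] at this
  set R := LinearMap.range (Φ : R0 →ₗ[ℂ] H) with hRdef
  have hRS : R ≤ S := by rintro _ ⟨r, rfl⟩; exact hΦS r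
  -- R is closed
  have hM0R0orth : M0 ≤ R0ᗮ := by
    intro n hn
    rw [Submodule.mem_orthogonal]
    intro u hu
    have := hu.2 n hn
    rw [← inner_conj_symm, this, map_zero]
  set e0 : H →L[ℂ] R0 := Submodule.orthogonalProjectionOnto R0 with he0def
  have he0Φ : ∀ r : R0, e0 (Φ r) = r := by
    intro r
    have : Φ r = (r : H) + (Φ r - (r : H)) := by abel
    rw [this, map_add]
    rw [Submodule.orthogonalProjectionOnto_mem_subspace_eq_self r,
      Submodule.orthogonalProjectionOnto_apply_of_mem_orthogonal (hM0R0orth (hΦdec r))]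
    simp
  have hRker : (R : Set H) =
      (LinearMap.ker ((ContinuousLinearMap.id ℂ H - Φ ∘L e0 : H →L[ℂ] H) : H →ₗ[ℂ] H) : Submodule ℂ H) := by
    ext x
    simp only [SetLike.mem_coe, LinearMap.mem_ker, ContinuousLinearMap.coe_coe, ContinuousLinearMap.coe_sub',
      Pi.sub_apply, ContinuousLinearMap.coe_id', id_eq, ContinuousLinearMap.comp_apply,
      sub_eq_zero]
    constructor
    · rintro ⟨r, rfl⟩
      rw [ContinuousLinearMap.coe_coe, he0Φ r]
    · intro hx
      exact ⟨e0 x, hx.symm⟩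
  have hRcl : IsClosed (R : Set H) := by
    rw [hRker]
    exact ContinuousLinearMap.isClosed_ker _
  -- S = R ⊔ (S ⊓ W)
  set N := S ⊓ W with hNdef
  have hSdecomp : S = R ⊔ N := by
    refine le_antisymm ?_ (sup_le hRS inf_le_left)
    intro s hs
    have hEs : E s ∈ R0 := hEM s (hSM hs)
    set u := Φ ⟨E s, hEs⟩ with hudef
    have hEu : E u = E s := hEΦ ⟨E s, hEs⟩
    have hsu : s - u ∈ M0 := by
      have h1 : E (s - u) = 0 := by rw [map_sub, hEu, sub_self]
      have h2 := hsubE (s - u)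
      rwa [h1, sub_zero] at h2
    have hsuN : s - u ∈ N := ⟨S.sub_mem hs (hΦS _), hM0W hsu⟩
    exact Submodule.mem_sup.2 ⟨u, LinearMap.mem_range_self _ _, s - u, hsuN, by abel⟩
  -- the Gram identity  [Φ r, Φ r'] = [r, r']
  have hM0kOrthM : ∀ n ∈ M0, ∀ m ∈ M, (inner ℂ (J m) n : ℂ) = 0 := by
    intro n hn m hm
    have : n ∈ kOrth J M := hWM ▸ hM0W hn
    exact this m hm
  have hM0kOrthM' : ∀ n ∈ M0, ∀ m ∈ M, (inner ℂ (J n) m : ℂ) = 0 := by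
    intro n hn m hm
    have h1 : n ∈ kOrth J M := hWM ▸ hM0W hn
    exact (mem_kOrth' hJ).1 h1 m hm
  have hGram : ∀ r r' : R0, (inner ℂ (J (Φ r)) (Φ r') : ℂ) = inner ℂ (J (r : H)) (r' : H) := by
    intro r r'
    have hr : Φ r = (r : H) + (Φ r - (r : H)) := by abel
    have hr' : Φ r' = (r' : H) + (Φ r' - (r' : H)) := by abel
    rw [hr, hr', map_add, inner_add_left, inner_add_right, inner_add_right]
    rw [hM0kOrthM _ (hΦdec r') _ (hR0M r.2),
      hM0kOrthM' _ (hΦdec r) _ (hR0M r'.2),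
      hM0kOrthM' _ (hΦdec r) _ (hM0M (hΦdec r'))]
    simp
  -- R ⊓ kOrth R = ⊥
  have hRbot : R ⊓ kOrth J R = ⊥ := by
    rw [Submodule.eq_bot_iff]
    rintro x ⟨hxR, hxO⟩
    obtain ⟨r, rfl⟩ := hxR
    have h1 : ∀ r' : R0, (inner ℂ (J (r' : H)) (r : H) : ℂ) = 0 := by
      intro r'
      have := hxO (Φ r') (LinearMap.mem_range_self _ _)
      rwa [ContinuousLinearMap.coe_coe, hGram r' r] at this
    have h2 : ∀ n ∈ M0, (inner ℂ (J n) (r : H) : ℂ) = 0 := by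
      intro n hn
      exact hM0kOrthM' n hn _ (hR0M r.2)
    have hMsup : M ≤ R0 ⊔ M0 := by
      intro m hm
      exact Submodule.mem_sup.2 ⟨E m, hEM m hm, m - E m, hsubE m, by abel⟩
    have hrW : (r : H) ∈ W := by
      rw [← hWM, mem_kOrth]
      intro m hm
      obtain ⟨u, hu, n, hn, rfl⟩ := Submodule.mem_sup.1 (hMsup hm)
      rw [map_add, inner_add_left, h1 ⟨u, hu⟩, h2 n hn, add_zero]
    have hrM0 : (r : H) ∈ M0 := ⟨hR0M r.2, hrW⟩
    have h0 : (inner ℂ (r : H) (r : H) : ℂ) = 0 := r.2.2 _ hrM0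
    have : (r : H) = 0 := inner_self_eq_zero.1 h0
    have : r = 0 := Subtype.ext this
    rw [this, map_zero]
  -- R0 ⊔ kOrth R0 = ⊤ (R0 is regular; only the sup is needed)
  have hWkR0 : W ≤ kOrth J R0 := by
    rw [← hWM]; exact kOrth_anti hR0M
  have hJM0kR0 : ∀ n ∈ M0, J n ∈ kOrth J R0 := by
    intro n hn
    rw [mem_kOrth]
    intro u hu
    rw [J_inner_inner hJ]
    have := hu.2 n hn
    rw [← inner_conj_symm, this, map_zero]
  -- the key top decomposition : ⊤ = V' ⊔ J(M0)
  have hmapJcl : IsClosed ((M.map (J : H →ₗ[ℂ] H) : Submodule ℂ H) : Set H) := by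
    have hseteq : ((M.map (J : H →ₗ[ℂ] H) : Submodule ℂ H) : Set H) = ⇑J ⁻¹' (M : Set H) := by
      ext x
      simp only [SetLike.mem_coe, Submodule.mem_map, Set.mem_preimage]
      constructor
      · rintro ⟨m, hm, rfl⟩
        simpa [J_apply_apply hJ] using hm
      · intro hx
        exact ⟨J x, hx, J_apply_apply hJ x⟩
    rw [hseteq]
    exact hMcl.preimage J.continuous
  haveI : CompleteSpace (M.map (J : H →ₗ[ℂ] H)) := hmapJcl.completeSpace_coe
  have htop : (⊤ : Submodule ℂ H) ≤ V' ⊔ M0.map (J : H →ₗ[ℂ] H) := by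
    have hsup := Submodule.sup_orthogonal_of_hasOrthogonalProjection (K := V')
    rw [← hsup]
    refine sup_le le_sup_left (le_trans ?_ le_sup_right)
    intro y hy
    have hyW : y ∈ Wᗮ := by
      rw [Submodule.mem_orthogonal]
      intro u hu
      exact hy _ (le_sup_right (α := Submodule ℂ H) hu)
    have hyM : y ∈ M.map (J : H →ₗ[ℂ] H) := by
      have h1 : W = (M.map (J : H →ₗ[ℂ] H))ᗮ := by
        rw [← hWM, kOrth_eq_orthogonal_map]
      rw [h1] at hyW
      rwa [Submodule.orthogonal_orthogonal] at hyW
    obtain ⟨m, hm, rfl⟩ := hyM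
    have hmW : m ∈ kOrth J M := by
      intro m' hm'
      rw [J_inner_left hJ]
      exact hy m' (hMV hm')
    exact ⟨m, ⟨hm, hWM ▸ hmW⟩, rfl⟩
  -- J(M0) ≤ R ⊔ kOrth R
  have hJM0R : ∀ n ∈ M0, J n ∈ R ⊔ kOrth J R := by
    intro n hn
    set t := ContinuousLinearMap.adjoint Φ n with htdef
    obtain ⟨c, hc, w, hw, hcw⟩ : ∃ c ∈ R0, ∃ w ∈ kOrth J R0, c + w = J (t : H) := by
      have h1 : J (t : H) ∈ R0 ⊔ kOrth J R0 := by
        have h2 : R0 ⊔ kOrth J R0 = ⊤ := by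
          rw [eq_top_iff]
          refine le_trans htop (sup_le (sup_le ?_ ?_) ?_)
          · exact le_trans hSM (le_trans (by
              intro m hm
              exact Submodule.mem_sup.2 ⟨E m, hEM m hm, m - E m, hsubE m, by abel⟩)
              (sup_le le_sup_left (le_trans (le_trans hM0W hWkR0) le_sup_right)))
          · exact le_trans hWkR0 le_sup_right
          · rintro _ ⟨n', hn', rfl⟩
            exact le_sup_right (α := Submodule ℂ H) (hJM0kR0 n' hn')
        rw [h2]; trivial
      exact Submodule.mem_sup.1 h1
    have hkey : ∀ r : R0, (inner ℂ (J (Φ r)) (J n - Φ ⟨c, hc⟩) : ℂ) = 0 := by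
      intro r
      rw [inner_sub_right, J_inner_inner hJ, hGram r ⟨c, hc⟩]
      have ha : (inner ℂ ((t : H)) ((r : H)) : ℂ) = inner ℂ n (Φ r) := by
        rw [← Submodule.coe_inner]
        exact ContinuousLinearMap.adjoint_inner_left Φ r n
      have h1 : (inner ℂ (Φ r) n : ℂ) = inner ℂ (r : H) (t : H) := by
        rw [← inner_conj_symm, ← ha]
        exact inner_conj_symm _ _
      have h2 : (inner ℂ ((r : H)) ((t : H)) : ℂ) = inner ℂ (J (r : H)) (J (t : H)) := by
        rw [J_inner_inner hJ]
      have h3 : (inner ℂ (J (r : H)) (J (t : H)) : ℂ) = inner ℂ (J (r : H)) c := by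
        rw [← hcw, inner_add_right]
        rw [hw _ r.2, add_zero]
      rw [h1, h2, h3]
      simp
    have hmem : J n - Φ ⟨c, hc⟩ ∈ kOrth J R := by
      rw [mem_kOrth]
      rintro _ ⟨r, rfl⟩
      exact hkey r
    exact Submodule.mem_sup.2 ⟨Φ ⟨c, hc⟩, LinearMap.mem_range_self _ _, _, hmem, by abel⟩
  -- R ⊔ kOrth R = ⊤
  have hRtop : R ⊔ kOrth J R = ⊤ := by
    rw [eq_top_iff]
    refine le_trans htop (sup_le (sup_le ?_ ?_) ?_)
    · rw [hSdecomp]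
      exact sup_le le_sup_left
        (le_trans (le_trans inf_le_right (kOrth_anti hRS)) le_sup_right)
    · exact le_trans (kOrth_anti hRS) le_sup_right
    · rintro _ ⟨n, hn, rfl⟩
      exact hJM0R n hn
  -- conclude
  refine ⟨⟨T, hT⟩, R, N, ⟨hRcl, hRbot, hRtop⟩, ?_, ?_, hSdecomp⟩
  · intro n hn
    exact hn.2 n hn.1
  · intro a ha b hb
    exact hb.2 a (hRS ha)

/-- `S` is quasi-pseudo-regular if and only if `S` is an
operator range and `S + S^⊥` is closed. -/
theorem qpr_iff_opRange_and_closed (J : H →L[ℂ] H) (hJ : IsFundSym J)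
    (S : Submodule ℂ H) :
    IsQpr J S ↔
      IsOpRange S ∧ IsClosed ((S ⊔ kOrth J S : Submodule ℂ H) : Set H) := by
  constructor
  · rintro ⟨hOp, R, N, hReg, hNeu, hKO, rfl⟩
    exact ⟨hOp, forward_closed hReg hNeu hKO⟩
  · rintro ⟨hOp, hcl⟩
    exact backward hJ hOp hcl

end KreinPaper
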